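/- For every fixed radius R > 0 and dimension n ≥ 2, the function s ↦ V^n_s(R) is strictly decreasing on ℝ. -/

import Mathlib

/-- Volume of the Euclidean unit `n`-ball: `b_n = π^(n/2) / Γ(n/2 + 1)`. -/
noncomputable def eucBallVol (n : ℕ) : ℝ :=
  Real.pi ^ ((n : ℝ) / 2) / Real.Gamma ((n : ℝ) / 2 + 1)

/-- Volume of the unit `n`-sphere: `w_n = (n+1) b_{n+1}`. -/
noncomputable def sphVol (n : ℕ) : ℝ := ((n : ℝ) + 1) * eucBallVol (n + 1)

/-- `V^n_s(R)`: the volume of a metric ball of radius `R` in the simply connected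
`n`-dimensional space form of constant scalar curvature `s`
(sectional curvature `σ = s/(n(n-1))`, radius `ρ = 1/√|σ|`). -/
noncomputable def spaceFormVol (n : ℕ) (s R : ℝ) : ℝ :=
  if 0 < s then
    (if R < Real.pi * Real.sqrt ((n : ℝ) * ((n : ℝ) - 1) / s) then
      sphVol (n - 1) *
        ∫ t in (0 : ℝ)..R,
          (Real.sin (Real.sqrt (s / ((n : ℝ) * ((n : ℝ) - 1))) * t) /
            Real.sqrt (s / ((n : ℝ) * ((n : ℝ) - 1)))) ^ (n - 1)
    else sphVol n * Real.sqrt ((n : ℝ) * ((n : ℝ) - 1) / s) ^ n)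
  else if s = 0 then eucBallVol n * R ^ n
  else
    sphVol (n - 1) *
      ∫ t in (0 : ℝ)..R,
        (Real.sinh (Real.sqrt (-s / ((n : ℝ) * ((n : ℝ) - 1))) * t) /
          Real.sqrt (-s / ((n : ℝ) * ((n : ℝ) - 1)))) ^ (n - 1)

open Real intervalIntegral Set
lemma integral_sin_pow_gamma (m : ℕ) :
    (∫ x in (0:ℝ)..π, Real.sin x ^ m) =
      Real.sqrt π * Real.Gamma (((m:ℝ) + 1) / 2) / Real.Gamma ((m:ℝ) / 2 + 1) := by
  induction m using Nat.twoStepInduction with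
  | zero =>
      rw [show (((0:ℕ):ℝ) + 1) / 2 = 1/2 by norm_num, show ((0:ℕ):ℝ)/2 + 1 = 1 by norm_num,
        Real.Gamma_one, Real.Gamma_one_half_eq]
      simp [Real.mul_self_sqrt Real.pi_pos.le]
  | one =>
      have h : ((1:ℕ):ℝ) / 2 + 1 = 1/2 + 1 := by norm_num
      simp only [pow_one]
      rw [integral_sin]
      rw [show (((1:ℕ):ℝ) + 1) / 2 = 1 by norm_num, Real.Gamma_one]
      rw [h, Real.Gamma_add_one (by norm_num : (1/2:ℝ) ≠ 0), Real.Gamma_one_half_eq]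
      have hs : Real.sqrt π ≠ 0 := (Real.sqrt_pos.2 Real.pi_pos).ne'
      rw [Real.cos_zero, Real.cos_pi]
      field_simp
      ring
  | more m ih _ =>
      have key := integral_sin_pow (a := 0) (b := π) m
      rw [Real.sin_zero, Real.sin_pi] at key
      simp only [zero_pow (Nat.succ_ne_zero m), zero_mul, mul_zero, sub_zero, zero_div,
        zero_add] at key
      rw [key, ih]
      have hx : (0:ℝ) < (m:ℝ) + 1 := by positivity
      push_cast
      have h1 : ((m:ℝ) + 2 + 1) / 2 = ((m:ℝ) + 1) / 2 + 1 := by ring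
      have h2 : ((m:ℝ) + 2) / 2 + 1 = ((m:ℝ) / 2 + 1) + 1 := by ring
      rw [h1, h2, Real.Gamma_add_one (show ((m:ℝ)+1)/2 ≠ 0 by positivity),
        Real.Gamma_add_one (show (m:ℝ)/2 + 1 ≠ 0 by positivity)]
      have g1 : (0:ℝ) < Real.Gamma (((m:ℝ) + 1) / 2) := Real.Gamma_pos_of_pos (by positivity)
      have g2 : (0:ℝ) < Real.Gamma ((m:ℝ) / 2 + 1) := Real.Gamma_pos_of_pos (by positivity)
      field_simp

lemma eucBallVol_pos (n : ℕ) : 0 < eucBallVol n := by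
  unfold eucBallVol
  exact div_pos (Real.rpow_pos_of_pos Real.pi_pos _) (Real.Gamma_pos_of_pos (by positivity))

lemma sphVol_pos (n : ℕ) : 0 < sphVol n :=
  mul_pos (by positivity) (eucBallVol_pos _)

lemma sphVol_succ (m : ℕ) :
    sphVol (m + 1) = sphVol m * ∫ x in (0:ℝ)..π, Real.sin x ^ m := by
  rw [integral_sin_pow_gamma]
  unfold sphVol eucBallVol
  push_cast
  have h1 : ((m:ℝ) + 1 + 1) / 2 + 1 = ((m:ℝ) / 2 + 1) + 1 := by ring
  have h2 : ((m:ℝ) + 1) / 2 + 1 = ((m:ℝ) + 1) / 2 + 1 := rfl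
  rw [h1, Real.Gamma_add_one (show (m:ℝ)/2 + 1 ≠ 0 by positivity),
    Real.Gamma_add_one (show ((m:ℝ)+1)/2 ≠ 0 by positivity)]
  have hp1 : Real.pi ^ (((m:ℝ) + 1 + 1) / 2) =
      Real.pi ^ (((m:ℝ) + 1) / 2) * Real.sqrt π := by
    rw [Real.sqrt_eq_rpow, ← Real.rpow_add Real.pi_pos]
    ring_nf
  rw [hp1]
  have g1 : (0:ℝ) < Real.Gamma (((m:ℝ) + 1) / 2) := Real.Gamma_pos_of_pos (by positivity)
  have g2 : (0:ℝ) < Real.Gamma ((m:ℝ) / 2 + 1) := Real.Gamma_pos_of_pos (by positivity)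
  have hpi : (0:ℝ) < Real.pi ^ (((m:ℝ) + 1) / 2) := Real.rpow_pos_of_pos Real.pi_pos _
  field_simp
  ring
noncomputable def sfG (c s t : ℝ) : ℝ :=
  if 0 < s then Real.sin (Real.sqrt (s / c) * t) / Real.sqrt (s / c)
  else if s = 0 then t
  else Real.sinh (Real.sqrt (-s / c) * t) / Real.sqrt (-s / c)

noncomputable def sfU (c R s : ℝ) : ℝ :=
  if 0 < s then min R (Real.pi * Real.sqrt (c / s)) else R

lemma sfG_continuous (c s : ℝ) : Continuous fun t => sfG c s t := by
  unfold sfG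
  rcases lt_or_ge 0 s with h | h
  · simp only [if_pos h]
    exact (Real.continuous_sin.comp (continuous_const.mul continuous_id)).div_const _
  · rcases eq_or_lt_of_le h with h0 | h0
    · simp only [if_neg (not_lt.2 h), if_pos h0]
      exact continuous_id
    · simp only [if_neg (not_lt.2 h), if_neg (ne_of_lt h0)]
      exact (Real.continuous_sinh.comp (continuous_const.mul continuous_id)).div_const _

lemma sfG_nonneg {c s t : ℝ} (ht : 0 ≤ t) (h : 0 < s → Real.sqrt (s / c) * t ≤ π) :
    0 ≤ sfG c s t := by
  unfold sfG
  rcases lt_or_ge 0 s with hs | hs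
  · rw [if_pos hs]
    exact div_nonneg
      (Real.sin_nonneg_of_nonneg_of_le_pi (mul_nonneg (Real.sqrt_nonneg _) ht) (h hs))
      (Real.sqrt_nonneg _)
  · rcases eq_or_lt_of_le hs with h0 | h0
    · rw [if_neg (not_lt.2 hs), if_pos h0]
      exact ht
    · rw [if_neg (not_lt.2 hs), if_neg (ne_of_lt h0)]
      exact div_nonneg
        (Real.sinh_nonneg_iff.2 (mul_nonneg (Real.sqrt_nonneg _) ht)) (Real.sqrt_nonneg _)

lemma sqrt_mul_sqrt_inv {c s : ℝ} (hc : 0 < c) (hs : 0 < s) :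
    Real.sqrt (s / c) * Real.sqrt (c / s) = 1 := by
  rw [← Real.sqrt_mul (div_pos hs hc).le,
    show s / c * (c / s) = 1 by field_simp, Real.sqrt_one]


lemma sin_lt_div {k t : ℝ} (hk : 0 < k) (ht : 0 < t) : Real.sin (k * t) / k < t := by
  rw [div_lt_iff₀ hk]
  calc Real.sin (k * t) < k * t := Real.sin_lt (mul_pos hk ht)
    _ = t * k := mul_comm _ _

lemma lt_sinh_div {k t : ℝ} (hk : 0 < k) (ht : 0 < t) : t < Real.sinh (k * t) / k := by
  rw [lt_div_iff₀ hk]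
  calc t * k = k * t := mul_comm _ _
    _ < Real.sinh (k * t) := Real.self_lt_sinh_iff.2 (mul_pos hk ht)

lemma sinDiv_anti {a b : ℝ} (ha : 0 < a) (hab : a < b) (hb : b ≤ π) :
    Real.sin b / b < Real.sin a / a := by
  have key : StrictAntiOn (fun x => Real.sin x / x) (Icc a b) := by
    apply strictAntiOn_of_deriv_neg (convex_Icc a b)
    · exact Real.continuous_sin.continuousOn.div continuousOn_id
        (fun x hx => ne_of_gt (lt_of_lt_of_le ha hx.1))
    · intro x hx
      rw [interior_Icc] at hx
      have hx0 : (0:ℝ) < x := ha.trans hx.1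
      have hd : HasDerivAt (fun x => Real.sin x / x)
          ((Real.cos x * x - Real.sin x * 1) / x ^ 2) x :=
        (Real.hasDerivAt_sin x).div (hasDerivAt_id x) hx0.ne'
      rw [hd.deriv]
      apply div_neg_of_neg_of_pos _ (by positivity)
      rw [sub_neg, mul_one]
      rcases lt_or_ge x (π/2) with h | h
      · have := Real.lt_tan hx0 h
        rw [Real.tan_eq_sin_div_cos, lt_div_iff₀ (Real.cos_pos_of_mem_Ioo ⟨by linarith [Real.pi_pos], h⟩)] at this
        linarith
      · have hcos : Real.cos x ≤ 0 :=
          Real.cos_nonpos_of_pi_div_two_le_of_le h (by linarith [hx.2.trans_le hb, Real.pi_pos])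
        have hsin : 0 < Real.sin x :=
          Real.sin_pos_of_pos_of_lt_pi hx0 (hx.2.trans_le hb)
        nlinarith
  exact key ⟨le_refl a, hab.le⟩ ⟨hab.le, le_refl b⟩ hab

lemma sinh_lt_mul_cosh {x : ℝ} (hx : 0 < x) : Real.sinh x < x * Real.cosh x := by
  have key : StrictMonoOn (fun x => x * Real.cosh x - Real.sinh x) (Icc 0 x) := by
    apply strictMonoOn_of_deriv_pos (convex_Icc 0 x)
    · fun_prop
    · intro y hy
      rw [interior_Icc] at hy
      have hd : HasDerivAt (fun x => x * Real.cosh x - Real.sinh x)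
          (1 * Real.cosh y + y * Real.sinh y - Real.cosh y) y :=
        ((hasDerivAt_id y).mul (Real.hasDerivAt_cosh y)).sub (Real.hasDerivAt_sinh y)
      rw [hd.deriv]
      have := mul_pos hy.1 (Real.sinh_pos_iff.2 hy.1)
      linarith
  have := key ⟨le_refl 0, hx.le⟩ ⟨hx.le, le_refl x⟩ hx
  simp at this
  linarith

lemma sinhDiv_mono {a b : ℝ} (ha : 0 < a) (hab : a < b) :
    Real.sinh a / a < Real.sinh b / b := by
  have key : StrictMonoOn (fun x => Real.sinh x / x) (Icc a b) := by
    apply strictMonoOn_of_deriv_pos (convex_Icc a b)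
    · exact Real.continuous_sinh.continuousOn.div continuousOn_id
        (fun x hx => ne_of_gt (lt_of_lt_of_le ha hx.1))
    · intro x hx
      rw [interior_Icc] at hx
      have hx0 : (0:ℝ) < x := ha.trans hx.1
      have hd : HasDerivAt (fun x => Real.sinh x / x)
          ((Real.cosh x * x - Real.sinh x * 1) / x ^ 2) x :=
        (Real.hasDerivAt_sinh x).div (hasDerivAt_id x) hx0.ne'
      rw [hd.deriv]
      apply div_pos _ (by positivity)
      have := sinh_lt_mul_cosh hx0
      nlinarith
  exact key ⟨le_refl a, hab.le⟩ ⟨hab.le, le_refl b⟩ hab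

lemma div_mul_cancel_aux (x b : ℝ) {t : ℝ} (ht : t ≠ 0) : x / (b * t) * t = x / b := by
  rw [div_mul_eq_mul_div, mul_div_mul_right _ _ ht]

lemma sfG_lt {c s1 s2 t : ℝ} (hc : 0 < c) (ht : 0 < t) (h12 : s1 < s2)
    (h2 : 0 < s2 → Real.sqrt (s2 / c) * t ≤ π) :
    sfG c s2 t < sfG c s1 t := by
  unfold sfG
  rcases lt_or_ge 0 s2 with hs2 | hs2
  · rw [if_pos hs2]
    have hk2 : 0 < Real.sqrt (s2 / c) := Real.sqrt_pos.2 (div_pos hs2 hc)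
    rcases lt_trichotomy 0 s1 with hs1 | hs1 | hs1
    · rw [if_pos hs1]
      have hk1 : 0 < Real.sqrt (s1 / c) := Real.sqrt_pos.2 (div_pos hs1 hc)
      have hk12 : Real.sqrt (s1 / c) < Real.sqrt (s2 / c) :=
        Real.sqrt_lt_sqrt (div_pos hs1 hc).le (by apply div_lt_div_of_pos_right h12 hc)
      have ha : 0 < Real.sqrt (s1 / c) * t := mul_pos hk1 ht
      have hab : Real.sqrt (s1 / c) * t < Real.sqrt (s2 / c) * t :=
        mul_lt_mul_of_pos_right hk12 ht
      have key := sinDiv_anti ha hab (h2 hs2)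
      have e1 : Real.sin (Real.sqrt (s1 / c) * t) / Real.sqrt (s1 / c) =
          Real.sin (Real.sqrt (s1 / c) * t) / (Real.sqrt (s1 / c) * t) * t :=
        (div_mul_cancel_aux _ _ ht.ne').symm
      have e2 : Real.sin (Real.sqrt (s2 / c) * t) / Real.sqrt (s2 / c) =
          Real.sin (Real.sqrt (s2 / c) * t) / (Real.sqrt (s2 / c) * t) * t :=
        (div_mul_cancel_aux _ _ ht.ne').symm
      rw [e1, e2]
      exact mul_lt_mul_of_pos_right key ht
    · rw [if_neg (by rw [← hs1]; exact lt_irrefl 0), if_pos hs1.symm]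
      exact sin_lt_div hk2 ht
    · rw [if_neg (not_lt.2 hs1.le), if_neg (ne_of_lt hs1)]
      have hk1 : 0 < Real.sqrt (-s1 / c) := Real.sqrt_pos.2 (div_pos (by linarith) hc)
      exact (sin_lt_div hk2 ht).trans (lt_sinh_div hk1 ht)
  · rw [if_neg (not_lt.2 hs2)]
    rcases eq_or_lt_of_le hs2 with h0 | h0
    · rw [if_pos h0, if_neg (not_lt.2 (by linarith : s1 ≤ 0)), if_neg (by linarith : s1 ≠ 0)]
      have hk1 : 0 < Real.sqrt (-s1 / c) := Real.sqrt_pos.2 (div_pos (by linarith) hc)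
      exact lt_sinh_div hk1 ht
    · rw [if_neg (ne_of_lt h0), if_neg (not_lt.2 (by linarith : s1 ≤ 0)),
        if_neg (by linarith : s1 ≠ 0)]
      have hk1 : 0 < Real.sqrt (-s1 / c) := Real.sqrt_pos.2 (div_pos (by linarith) hc)
      have hk2 : 0 < Real.sqrt (-s2 / c) := Real.sqrt_pos.2 (div_pos (by linarith) hc)
      have hk21 : Real.sqrt (-s2 / c) < Real.sqrt (-s1 / c) :=
        Real.sqrt_lt_sqrt (div_pos (by linarith) hc).le
          (div_lt_div_of_pos_right (by linarith) hc)
      have ha : 0 < Real.sqrt (-s2 / c) * t := mul_pos hk2 ht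
      have hab : Real.sqrt (-s2 / c) * t < Real.sqrt (-s1 / c) * t :=
        mul_lt_mul_of_pos_right hk21 ht
      have key := sinhDiv_mono ha hab
      have e1 : Real.sinh (Real.sqrt (-s1 / c) * t) / Real.sqrt (-s1 / c) =
          Real.sinh (Real.sqrt (-s1 / c) * t) / (Real.sqrt (-s1 / c) * t) * t :=
        (div_mul_cancel_aux _ _ ht.ne').symm
      have e2 : Real.sinh (Real.sqrt (-s2 / c) * t) / Real.sqrt (-s2 / c) =
          Real.sinh (Real.sqrt (-s2 / c) * t) / (Real.sqrt (-s2 / c) * t) * t :=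
        (div_mul_cancel_aux _ _ ht.ne').symm
      rw [e1, e2]
      exact mul_lt_mul_of_pos_right key ht

lemma spaceFormVol_rep (n : ℕ) (hn : 2 ≤ n) {R : ℝ} (hR : 0 < R) (s : ℝ) :
    spaceFormVol n s R =
      sphVol (n - 1) *
        ∫ t in (0:ℝ)..(sfU ((n : ℝ) * ((n : ℝ) - 1)) R s),
          sfG ((n : ℝ) * ((n : ℝ) - 1)) s t ^ (n - 1) := by
  have hn2 : (2:ℝ) ≤ (n:ℝ) := by exact_mod_cast hn
  have hc : (0:ℝ) < (n : ℝ) * ((n : ℝ) - 1) := by nlinarith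
  set c : ℝ := (n : ℝ) * ((n : ℝ) - 1) with hcdef
  have hmn : n - 1 + 1 = n := by omega
  unfold spaceFormVol sfU sfG
  simp only [← hcdef]
  rcases lt_or_ge 0 s with hs | hs
  · rw [if_pos hs, if_pos hs]
    simp only [if_pos hs]
    rcases lt_or_ge R (Real.pi * Real.sqrt (c / s)) with hRs | hRs
    · rw [if_pos hRs, min_eq_left hRs.le]
    · rw [if_neg (not_lt.2 hRs), min_eq_right hRs]
      -- key computation
      have hk : 0 < Real.sqrt (s / c) := Real.sqrt_pos.2 (div_pos hs hc)
      have hρ : 0 < Real.sqrt (c / s) := Real.sqrt_pos.2 (div_pos hc hs)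
      have hkρ : Real.sqrt (s / c) * Real.sqrt (c / s) = 1 := sqrt_mul_sqrt_inv hc hs
      have hρinv : Real.sqrt (c / s) = (Real.sqrt (s / c))⁻¹ :=
        eq_inv_of_mul_eq_one_left (by rw [mul_comm]; exact hkρ)
      have hup : Real.sqrt (s / c) * (Real.pi * Real.sqrt (c / s)) = Real.pi := by
        rw [← mul_assoc, mul_comm (Real.sqrt (s / c)) Real.pi, mul_assoc, hkρ, mul_one]
      have hint :
          (∫ t in (0:ℝ)..(Real.pi * Real.sqrt (c / s)),
            (Real.sin (Real.sqrt (s / c) * t) / Real.sqrt (s / c)) ^ (n - 1)) =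
          Real.sqrt (c / s) ^ n * ∫ x in (0:ℝ)..Real.pi, Real.sin x ^ (n - 1) := by
        simp only [div_pow]
        rw [intervalIntegral.integral_div]
        have := intervalIntegral.integral_comp_mul_left
          (f := fun x => Real.sin x ^ (n - 1)) (a := (0:ℝ))
          (b := Real.pi * Real.sqrt (c / s)) (c := Real.sqrt (s / c)) hk.ne'
        rw [mul_zero, hup] at this
        rw [this, smul_eq_mul, hρinv]
        have hpow : (Real.sqrt (s / c))⁻¹ ^ n
            = (Real.sqrt (s / c))⁻¹ ^ (n - 1) * (Real.sqrt (s / c))⁻¹ := by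
          rw [← pow_succ, hmn]
        rw [hpow, inv_pow, div_eq_mul_inv]
        ring
      rw [hint, ← mul_assoc]
      have hsph : sphVol n = sphVol (n - 1) * ∫ x in (0:ℝ)..Real.pi, Real.sin x ^ (n - 1) := by
        conv_lhs => rw [← hmn]
        exact sphVol_succ (n - 1)
      rw [hsph]
      ring
  · rw [if_neg (not_lt.2 hs), if_neg (not_lt.2 hs)]
    simp only [if_neg (not_lt.2 hs)]
    rcases eq_or_lt_of_le hs with h0 | h0
    · simp only [if_pos h0]
      rw [integral_pow, hmn]
      have hn0 : ((n:ℝ)) ≠ 0 := by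
        have : (0:ℕ) < n := by omega
        exact_mod_cast this.ne'
      have hcast : ((n - 1 : ℕ) : ℝ) = (n : ℝ) - 1 := by
        have : (1:ℕ) ≤ n := by omega
        push_cast [this]
        ring
      unfold sphVol
      rw [hmn, hcast]
      rw [zero_pow (by omega : n ≠ 0), sub_zero]
      field_simp
      ring_nf
      rw [mul_assoc, mul_inv_cancel₀ hn0, mul_one]
    · simp only [if_neg (ne_of_lt h0)]

/-- for every fixed radius `R > 0` and dimension `n ≥ 2`,
the function `s ↦ V^n_s(R)` is strictly decreasing on `ℝ`. -/
theorem spaceFormVol_strictAnti (n : ℕ) (hn : 2 ≤ n) (R : ℝ) (hR : 0 < R) :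
    StrictAnti (fun s : ℝ => spaceFormVol n s R) := by
  intro s1 s2 h12
  simp only
  rw [spaceFormVol_rep n hn hR s1, spaceFormVol_rep n hn hR s2]
  have hn2 : (2:ℝ) ≤ (n:ℝ) := by exact_mod_cast hn
  have hc : (0:ℝ) < (n : ℝ) * ((n : ℝ) - 1) := by nlinarith
  set c : ℝ := (n : ℝ) * ((n : ℝ) - 1) with hcdef
  set m : ℕ := n - 1 with hmdef
  have hm0 : m ≠ 0 := by omega
  -- positivity of the upper limits
  have hUpos : ∀ s : ℝ, 0 < sfU c R s := by
    intro s
    unfold sfU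
    split_ifs with h
    · exact lt_min hR (mul_pos Real.pi_pos (Real.sqrt_pos.2 (div_pos hc h)))
    · exact hR
  -- the bound needed for sin nonnegativity
  have hbound : ∀ s t : ℝ, 0 < s → t ≤ sfU c R s → Real.sqrt (s / c) * t ≤ π := by
    intro s t hs ht
    unfold sfU at ht
    rw [if_pos hs] at ht
    have h1 : t ≤ Real.pi * Real.sqrt (c / s) := le_trans ht (min_le_right _ _)
    calc Real.sqrt (s / c) * t ≤ Real.sqrt (s / c) * (Real.pi * Real.sqrt (c / s)) :=
          mul_le_mul_of_nonneg_left h1 (Real.sqrt_nonneg _)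
      _ = Real.pi * (Real.sqrt (s / c) * Real.sqrt (c / s)) := by ring
      _ = π := by rw [sqrt_mul_sqrt_inv hc hs, mul_one]
  -- monotonicity of the upper limit
  have hU21 : sfU c R s2 ≤ sfU c R s1 := by
    unfold sfU
    split_ifs with h2 h1 h1
    · refine min_le_min (le_refl R) (mul_le_mul_of_nonneg_left ?_ Real.pi_pos.le)
      exact Real.sqrt_le_sqrt (div_le_div_of_nonneg_left hc.le h1 h12.le)
    · exact min_le_left _ _
    · exact absurd (h1.trans h12) h2
    · exact le_refl R
  have hcont1 : Continuous fun t => sfG c s1 t ^ m := (sfG_continuous c s1).pow m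
  have hcont2 : Continuous fun t => sfG c s2 t ^ m := (sfG_continuous c s2).pow m
  have step1 : (∫ t in (0:ℝ)..sfU c R s2, sfG c s2 t ^ m) <
      ∫ t in (0:ℝ)..sfU c R s2, sfG c s1 t ^ m := by
    apply intervalIntegral.integral_lt_integral_of_continuousOn_of_le_of_exists_lt
      (hUpos s2) hcont2.continuousOn hcont1.continuousOn
    · intro x hx
      have hlt := sfG_lt hc hx.1 h12 (fun hs => hbound s2 x hs hx.2)
      exact pow_le_pow_left₀ (sfG_nonneg hx.1.le (fun hs => hbound s2 x hs hx.2)) hlt.le m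
    · refine ⟨sfU c R s2, ⟨(hUpos s2).le, le_refl _⟩, ?_⟩
      exact pow_lt_pow_left₀
        (sfG_lt hc (hUpos s2) h12 (fun hs => hbound s2 _ hs (le_refl _)))
        (sfG_nonneg (hUpos s2).le (fun hs => hbound s2 _ hs (le_refl _))) hm0
  have step2 : (∫ t in (0:ℝ)..sfU c R s2, sfG c s1 t ^ m) ≤
      ∫ t in (0:ℝ)..sfU c R s1, sfG c s1 t ^ m := by
    have hadd := intervalIntegral.integral_add_adjacent_intervals
      (μ := MeasureTheory.volume) (a := (0:ℝ)) (b := sfU c R s2) (c := sfU c R s1)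
      (f := fun t => sfG c s1 t ^ m)
      (hcont1.intervalIntegrable _ _) (hcont1.intervalIntegrable _ _)
    have hnn : 0 ≤ ∫ t in (sfU c R s2)..(sfU c R s1), sfG c s1 t ^ m := by
      apply intervalIntegral.integral_nonneg hU21
      intro x hx
      exact pow_nonneg (sfG_nonneg ((hUpos s2).le.trans hx.1)
        (fun hs => hbound s1 x hs hx.2)) m
    linarith [hadd]
  exact mul_lt_mul_of_pos_left (step1.trans_le step2) (sphVol_pos m)
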